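/- Let P := {(x₁,x₂,y) ∈ ℝ² × ℝ : −x₁ + y ≤ 0, −x₂ + y ≤ 0, x₁ + x₂ + y ≤ 2} with integer variables x = (x₁,x₂) (p = 2, q = 1), and let P_I := conv({(x,y) ∈ P : x ∈ ℤ²}). Then sup{y : (x,y) ∈ P_I} = 0, while for every i ∈ ℕ, sup{y : (x,y) ∈ P^{(i)}} > 0, where P^{(i)} denotes the i-th iterated split closure of P. In particular, no finite sequence of split cuts proves the optimal value 0 of this mixed integer program. -/

import Mathlib

open Set

noncomputable section

/-- `x` is an integral vector. -/
def IsIntVec {p : ℕ} (x : Fin p → ℝ) : Prop := ∀ j, ∃ n : ℤ, x j = (n : ℝ)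

/-- The split closure of a set `C`: the intersection of `C` with all half-spaces valid for
both sides of some split disjunction `d·x ≤ δ ∨ d·x ≥ δ + 1`. -/
def splitClosure {p q : ℕ} (C : Set ((Fin p → ℝ) × (Fin q → ℝ))) :
    Set ((Fin p → ℝ) × (Fin q → ℝ)) :=
  {z ∈ C | ∀ (α : Fin p → ℝ) (β : Fin q → ℝ) (γ : ℝ),
    (∃ (d : Fin p → ℤ) (δ : ℤ),
      ∀ w ∈ C, ((∑ j, (d j : ℝ) * w.1 j) ≤ (δ : ℝ) ∨ (δ : ℝ) + 1 ≤ (∑ j, (d j : ℝ) * w.1 j)) →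
        (∑ j, α j * w.1 j) + (∑ j, β j * w.2 j) ≤ γ) →
    (∑ j, α j * z.1 j) + (∑ j, β j * z.2 j) ≤ γ}

/-- Iterated split closures, `C^{(0)} = C`. -/
def splitIter {p q : ℕ} (C : Set ((Fin p → ℝ) × (Fin q → ℝ))) :
    ℕ → Set ((Fin p → ℝ) × (Fin q → ℝ))
  | 0 => C
  | (i+1) => splitClosure (splitIter C i)

/-- The Cook–Kannan–Schrijver polyhedron with two integer and one continuous variable. -/
def cksP : Set ((Fin 2 → ℝ) × (Fin 1 → ℝ)) :=
  {z | -z.1 0 + z.2 0 ≤ 0 ∧ -z.1 1 + z.2 0 ≤ 0 ∧ z.1 0 + z.1 1 + z.2 0 ≤ 2}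

/-- Its mixed integer hull. -/
def cksPI : Set ((Fin 2 → ℝ) × (Fin 1 → ℝ)) :=
  convexHull ℝ {z ∈ cksP | IsIntVec z.1}

set_option linter.unnecessarySeqFocus false

abbrev pt := (Fin 2 → ℝ) × (Fin 1 → ℝ)
def b1 : pt := (![0,0], ![0])
def b2 : pt := (![2,0], ![0])
def b3 : pt := (![0,2], ![0])
def apexp (t : ℝ) : pt := (![2/3,2/3], ![t])
def tent (t : ℝ) : Set pt := convexHull ℝ {b1, b2, b3, apexp t}

lemma mem_tent (t c1 c2 c3 c4 : ℝ) (h1 : 0 ≤ c1) (h2 : 0 ≤ c2) (h3 : 0 ≤ c3) (h4 : 0 ≤ c4)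
    (hs : c1 + c2 + c3 + c4 = 1) :
    c1 • b1 + c2 • b2 + c3 • b3 + c4 • apexp t ∈ tent t := by
  have h := (convex_convexHull ℝ ({b1, b2, b3, apexp t} : Set pt)).sum_mem
    (t := (Finset.univ : Finset (Fin 4))) (w := ![c1,c2,c3,c4]) (z := ![b1,b2,b3,apexp t])
    (by intro i _; fin_cases i <;> assumption)
    (by simp [Fin.sum_univ_four]; linarith)
    (by intro i _; fin_cases i <;> exact subset_convexHull ℝ _ (by simp))
  simpa [Fin.sum_univ_four, tent] using h

lemma mem_tent' (t c1 c2 c3 c4 x0 x1 y : ℝ) (h1 : 0 ≤ c1) (h2 : 0 ≤ c2) (h3 : 0 ≤ c3)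
    (h4 : 0 ≤ c4) (hs : c1 + c2 + c3 + c4 = 1)
    (hx0 : x0 = 2*c2 + (2/3)*c4) (hx1 : x1 = 2*c3 + (2/3)*c4) (hy : y = c4 * t) :
    ((![x0,x1], ![y]) : pt) ∈ tent t := by
  have he : ((![x0,x1], ![y]) : pt) = c1 • b1 + c2 • b2 + c3 • b3 + c4 • apexp t := by
    refine Prod.ext ?_ ?_
    · funext i; fin_cases i <;>
        simp [b1, b2, b3, apexp, Prod.fst_add, Pi.add_apply, Pi.smul_apply, smul_eq_mul] <;>
        linarith
    · funext i; fin_cases i <;>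
        simp [b1, b2, b3, apexp, Pi.add_apply, Pi.smul_apply, smul_eq_mul] <;> linarith
  rw [he]; exact mem_tent t c1 c2 c3 c4 h1 h2 h3 h4 hs

lemma cut_combo {C : Set pt} {t : ℝ}
    (d : Fin 2 → ℤ) (δ : ℤ) (α : Fin 2 → ℝ) (β : Fin 1 → ℝ) (γ : ℝ)
    (hval : ∀ w ∈ C, ((∑ j, (d j : ℝ) * w.1 j) ≤ (δ : ℝ) ∨ (δ : ℝ) + 1 ≤ (∑ j, (d j : ℝ) * w.1 j)) →
        (∑ j, α j * w.1 j) + (∑ j, β j * w.2 j) ≤ γ)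
    (f u0 u1 : ℝ) (hf : f = 1/3 ∨ f = 2/3)
    (hmemm : ((![2/3 - f*u0, 2/3 - f*u1], ![(1 - (3/2)*f)*t]) : pt) ∈ C)
    (hmemp : ((![2/3 + (1-f)*u0, 2/3 + (1-f)*u1], ![(1 - (3/2)*(1-f))*t]) : pt) ∈ C)
    (hsidem : (d 0 : ℝ) * (2/3 - f*u0) + (d 1 : ℝ) * (2/3 - f*u1) ≤ δ)
    (hsidep : (δ : ℝ) + 1 ≤ (d 0 : ℝ) * (2/3 + (1-f)*u0) + (d 1 : ℝ) * (2/3 + (1-f)*u1)) :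
    α 0 * (2/3) + α 1 * (2/3) + β 0 * (t/3) ≤ γ := by
  have hm := hval _ hmemm (Or.inl (by rw [Fin.sum_univ_two]; simpa using hsidem))
  have hp := hval _ hmemp (Or.inr (by rw [Fin.sum_univ_two]; simpa using hsidep))
  rw [Fin.sum_univ_two, Fin.sum_univ_one] at hm hp
  simp only [Matrix.cons_val_zero, Matrix.cons_val_one, Matrix.head_cons] at hm hp
  rcases hf with rfl | rfl
  · ring_nf at hm hp ⊢; linarith
  · ring_nf at hm hp ⊢; linarith

lemma apex_mem {C : Set pt} {t : ℝ} (hC : tent t ⊆ C) :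
    apexp (t/3) ∈ splitClosure C := by
  have hapex : apexp (t/3) ∈ tent t := by
    have h := mem_tent' t (2/9) (2/9) (2/9) (1/3) (2/3) (2/3) (t/3)
      (by norm_num) (by norm_num) (by norm_num) (by norm_num) (by norm_num)
      (by norm_num) (by norm_num) (by ring)
    exact h
  refine ⟨hC hapex, ?_⟩
  rintro α β γ ⟨d, δ, hval⟩
  have hs : (∑ j, (d j : ℝ) * (apexp (t/3)).1 j) = (d 0 : ℝ) * (2/3) + (d 1 : ℝ) * (2/3) := by
    rw [Fin.sum_univ_two]; simp [apexp]
  rcases le_or_gt ((d 0 : ℝ) * (2/3) + (d 1 : ℝ) * (2/3)) (δ : ℝ) with h1 | h1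
  · exact hval _ (hC hapex) (Or.inl (by rw [hs]; exact h1))
  rcases le_or_gt ((δ : ℝ) + 1) ((d 0 : ℝ) * (2/3) + (d 1 : ℝ) * (2/3)) with h2 | h2
  · exact hval _ (hC hapex) (Or.inr (by rw [hs]; exact h2))
  -- main case
  rw [Fin.sum_univ_two, Fin.sum_univ_one]
  simp only [apexp, Matrix.cons_val_zero, Matrix.cons_val_one, Matrix.head_cons]
  have hZ : 2*(d 0 + d 1) = 3*δ + 1 ∨ 2*(d 0 + d 1) = 3*δ + 2 := by
    have l1 : (3*δ : ℤ) < 2*(d 0 + d 1) := by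
      have : (3*(δ:ℝ)) < 2*((d 0 : ℝ) + (d 1 : ℝ)) := by linarith
      exact_mod_cast this
    have l2 : (2*(d 0 + d 1) : ℤ) < 3*δ + 3 := by
      have : 2*((d 0 : ℝ) + (d 1 : ℝ)) < 3*(δ:ℝ) + 3 := by linarith
      exact_mod_cast this
    omega
  rcases hZ with hZ | hZ
  · -- f = 1/3
    have hZr : 2*((d 0 : ℝ) + (d 1 : ℝ)) = 3*(δ:ℝ) + 1 := by exact_mod_cast hZ
    rcases lt_trichotomy (d 0) 0 with hd | hd | hd
    · have hdr : (d 0 : ℝ) ≤ -1 := by exact_mod_cast (show d 0 ≤ -1 by omega)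
      exact cut_combo d δ α β γ hval (1/3) (-1) 0 (Or.inl rfl)
        (hC (mem_tent' t 0 (1/3) (1/6) (1/2) _ _ _ (by norm_num) (by norm_num) (by norm_num)
          (by norm_num) (by norm_num) (by norm_num) (by norm_num) (by ring)))
        (hC (mem_tent' t (2/3) 0 (1/3) 0 _ _ _ (by norm_num) (by norm_num) (by norm_num)
          (by norm_num) (by norm_num) (by norm_num) (by norm_num) (by ring)))
        (by linarith) (by linarith)
    · rcases lt_trichotomy (d 1) 0 with he | he | he
      · have hdr : (d 0 : ℝ) = 0 := by exact_mod_cast hd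
        have her : (d 1 : ℝ) ≤ -1 := by exact_mod_cast (show d 1 ≤ -1 by omega)
        exact cut_combo d δ α β γ hval (1/3) 0 (-1) (Or.inl rfl)
          (hC (mem_tent' t 0 (1/6) (1/3) (1/2) _ _ _ (by norm_num) (by norm_num) (by norm_num)
            (by norm_num) (by norm_num) (by norm_num) (by norm_num) (by ring)))
          (hC (mem_tent' t (2/3) (1/3) 0 0 _ _ _ (by norm_num) (by norm_num) (by norm_num)
            (by norm_num) (by norm_num) (by norm_num) (by norm_num) (by ring)))
          (by linarith) (by linarith)
      · exfalso; omega
      · have hdr : (d 0 : ℝ) = 0 := by exact_mod_cast hd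
        have her : (1:ℝ) ≤ (d 1 : ℝ) := by exact_mod_cast (show 1 ≤ d 1 by omega)
        exact cut_combo d δ α β γ hval (1/3) 0 1 (Or.inl rfl)
          (hC (mem_tent' t (1/3) (1/6) 0 (1/2) _ _ _ (by norm_num) (by norm_num) (by norm_num)
            (by norm_num) (by norm_num) (by norm_num) (by norm_num) (by ring)))
          (hC (mem_tent' t 0 (1/3) (2/3) 0 _ _ _ (by norm_num) (by norm_num) (by norm_num)
            (by norm_num) (by norm_num) (by norm_num) (by norm_num) (by ring)))
          (by linarith) (by linarith)
    · have hdr : (1:ℝ) ≤ (d 0 : ℝ) := by exact_mod_cast (show 1 ≤ d 0 by omega)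
      exact cut_combo d δ α β γ hval (1/3) 1 0 (Or.inl rfl)
        (hC (mem_tent' t (1/3) 0 (1/6) (1/2) _ _ _ (by norm_num) (by norm_num) (by norm_num)
          (by norm_num) (by norm_num) (by norm_num) (by norm_num) (by ring)))
        (hC (mem_tent' t 0 (2/3) (1/3) 0 _ _ _ (by norm_num) (by norm_num) (by norm_num)
          (by norm_num) (by norm_num) (by norm_num) (by norm_num) (by ring)))
        (by linarith) (by linarith)
  · -- f = 2/3
    have hZr : 2*((d 0 : ℝ) + (d 1 : ℝ)) = 3*(δ:ℝ) + 2 := by exact_mod_cast hZ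
    rcases lt_trichotomy (d 0) 0 with hd | hd | hd
    · have hdr : (d 0 : ℝ) ≤ -1 := by exact_mod_cast (show d 0 ≤ -1 by omega)
      exact cut_combo d δ α β γ hval (2/3) (-1) 0 (Or.inr rfl)
        (hC (mem_tent' t 0 (2/3) (1/3) 0 _ _ _ (by norm_num) (by norm_num) (by norm_num)
          (by norm_num) (by norm_num) (by norm_num) (by norm_num) (by ring)))
        (hC (mem_tent' t (1/3) 0 (1/6) (1/2) _ _ _ (by norm_num) (by norm_num) (by norm_num)
          (by norm_num) (by norm_num) (by norm_num) (by norm_num) (by ring)))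
        (by linarith) (by linarith)
    · rcases lt_trichotomy (d 1) 0 with he | he | he
      · have hdr : (d 0 : ℝ) = 0 := by exact_mod_cast hd
        have her : (d 1 : ℝ) ≤ -1 := by exact_mod_cast (show d 1 ≤ -1 by omega)
        exact cut_combo d δ α β γ hval (2/3) 0 (-1) (Or.inr rfl)
          (hC (mem_tent' t 0 (1/3) (2/3) 0 _ _ _ (by norm_num) (by norm_num) (by norm_num)
            (by norm_num) (by norm_num) (by norm_num) (by norm_num) (by ring)))
          (hC (mem_tent' t (1/3) (1/6) 0 (1/2) _ _ _ (by norm_num) (by norm_num) (by norm_num)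
            (by norm_num) (by norm_num) (by norm_num) (by norm_num) (by ring)))
          (by linarith) (by linarith)
      · exfalso; omega
      · have hdr : (d 0 : ℝ) = 0 := by exact_mod_cast hd
        have her : (1:ℝ) ≤ (d 1 : ℝ) := by exact_mod_cast (show 1 ≤ d 1 by omega)
        exact cut_combo d δ α β γ hval (2/3) 0 1 (Or.inr rfl)
          (hC (mem_tent' t (2/3) (1/3) 0 0 _ _ _ (by norm_num) (by norm_num) (by norm_num)
            (by norm_num) (by norm_num) (by norm_num) (by norm_num) (by ring)))
          (hC (mem_tent' t 0 (1/6) (1/3) (1/2) _ _ _ (by norm_num) (by norm_num) (by norm_num)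
            (by norm_num) (by norm_num) (by norm_num) (by norm_num) (by ring)))
          (by linarith) (by linarith)
    · have hdr : (1:ℝ) ≤ (d 0 : ℝ) := by exact_mod_cast (show 1 ≤ d 0 by omega)
      exact cut_combo d δ α β γ hval (2/3) 1 0 (Or.inr rfl)
        (hC (mem_tent' t (2/3) 0 (1/3) 0 _ _ _ (by norm_num) (by norm_num) (by norm_num)
          (by norm_num) (by norm_num) (by norm_num) (by norm_num) (by ring)))
        (hC (mem_tent' t 0 (1/3) (1/6) (1/2) _ _ _ (by norm_num) (by norm_num) (by norm_num)
          (by norm_num) (by norm_num) (by norm_num) (by norm_num) (by ring)))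
        (by linarith) (by linarith)

lemma convex_splitClosure {p q : ℕ} {C : Set ((Fin p → ℝ) × (Fin q → ℝ))} (hC : Convex ℝ C) :
    Convex ℝ (splitClosure C) := by
  intro z1 hz1 z2 hz2 a b ha hb hab
  refine ⟨hC hz1.1 hz2.1 ha hb hab, ?_⟩
  intro α β γ hw
  have e1 := hz1.2 α β γ hw
  have e2 := hz2.2 α β γ hw
  have key : (∑ j, α j * (a • z1 + b • z2).1 j) + (∑ j, β j * (a • z1 + b • z2).2 j)
      = a * ((∑ j, α j * z1.1 j) + (∑ j, β j * z1.2 j))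
        + b * ((∑ j, α j * z2.1 j) + (∑ j, β j * z2.2 j)) := by
    simp only [Prod.fst_add, Prod.snd_add, Prod.smul_fst, Prod.smul_snd, Pi.add_apply,
      Pi.smul_apply, smul_eq_mul, Finset.mul_sum]
    simp only [mul_add, Finset.sum_add_distrib, Finset.mul_sum, mul_left_comm]
    ring
  rw [key]
  calc a * _ + b * _ ≤ a * γ + b * γ := by gcongr
    _ = γ := by rw [← add_mul, hab, one_mul]

lemma int_mem_splitClosure {C : Set pt} {z : pt} (hz : z ∈ C) (hint : IsIntVec z.1) :
    z ∈ splitClosure C := by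
  refine ⟨hz, ?_⟩
  rintro α β γ ⟨d, δ, hval⟩
  refine hval z hz ?_
  obtain ⟨n0, hn0⟩ := hint 0
  obtain ⟨n1, hn1⟩ := hint 1
  have hsum : (∑ j, (d j : ℝ) * z.1 j) = ((d 0 * n0 + d 1 * n1 : ℤ) : ℝ) := by
    rw [Fin.sum_univ_two, hn0, hn1]; push_cast; ring
  rw [hsum]
  rcases le_or_gt (d 0 * n0 + d 1 * n1) δ with h | h
  · exact Or.inl (by exact_mod_cast h)
  · exact Or.inr (by exact_mod_cast h)

lemma convex_cksP : Convex ℝ cksP := by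
  intro z1 hz1 z2 hz2 a b ha hb hab
  obtain ⟨p1, p2, p3⟩ := hz1
  obtain ⟨q1, q2, q3⟩ := hz2
  refine ⟨?_, ?_, ?_⟩ <;>
    simp only [Prod.fst_add, Prod.snd_add, Prod.smul_fst, Prod.smul_snd, Pi.add_apply,
      Pi.smul_apply, smul_eq_mul] <;> nlinarith

lemma b1_int : IsIntVec b1.1 := by
  intro j; fin_cases j
  · exact ⟨0, by norm_num [b1]⟩
  · exact ⟨0, by norm_num [b1]⟩
lemma b2_int : IsIntVec b2.1 := by
  intro j; fin_cases j
  · exact ⟨2, by norm_num [b2]⟩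
  · exact ⟨0, by norm_num [b2]⟩
lemma b3_int : IsIntVec b3.1 := by
  intro j; fin_cases j
  · exact ⟨0, by norm_num [b3]⟩
  · exact ⟨2, by norm_num [b3]⟩

lemma tent0_subset : tent (2/3) ⊆ cksP := by
  apply convexHull_min ?_ convex_cksP
  rintro z hz
  simp only [mem_insert_iff, mem_singleton_iff] at hz
  rcases hz with rfl | rfl | rfl | rfl <;> norm_num [cksP, b1, b2, b3, apexp]

lemma invariant (i : ℕ) : tent ((2/3)/3^i) ⊆ splitIter cksP i ∧
    Convex ℝ (splitIter cksP i) ∧ splitIter cksP i ⊆ cksP := by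
  induction i with
  | zero =>
    refine ⟨?_, convex_cksP, subset_rfl⟩
    simpa [splitIter] using tent0_subset
  | succ i ih =>
    refine ⟨?_, convex_splitClosure ih.2.1, fun z hz => ih.2.2 hz.1⟩
    have heq : (2/3 : ℝ)/3^(i+1) = ((2/3)/3^i)/3 := by rw [pow_succ]; ring
    show tent ((2/3)/3^(i+1)) ⊆ splitClosure (splitIter cksP i)
    rw [heq]
    apply convexHull_min ?_ (convex_splitClosure ih.2.1)
    rintro z hz
    simp only [mem_insert_iff, mem_singleton_iff] at hz
    rcases hz with rfl | rfl | rfl | rfl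
    · exact int_mem_splitClosure (ih.1 (subset_convexHull ℝ _ (by simp))) b1_int
    · exact int_mem_splitClosure (ih.1 (subset_convexHull ℝ _ (by simp))) b2_int
    · exact int_mem_splitClosure (ih.1 (subset_convexHull ℝ _ (by simp))) b3_int
    · exact apex_mem ih.1

lemma hull_bound : ∀ z ∈ cksPI, z.2 0 ≤ 0 := by
  have hsub : cksPI ⊆ {z : pt | z.2 0 ≤ 0} := by
    apply convexHull_min
    · rintro z ⟨hzP, hzI⟩
      obtain ⟨n0, hn0⟩ := hzI 0
      obtain ⟨n1, hn1⟩ := hzI 1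
      obtain ⟨a, b, c⟩ := hzP
      rw [hn0] at a c; rw [hn1] at b c
      by_contra h
      simp only [mem_setOf_eq, not_le] at h
      have h0 : (0:ℤ) < n0 := by exact_mod_cast (show (0:ℝ) < n0 by linarith)
      have h1 : (0:ℤ) < n1 := by exact_mod_cast (show (0:ℝ) < n1 by linarith)
      have g0 : (1:ℝ) ≤ n0 := by exact_mod_cast (show (1:ℤ) ≤ n0 by omega)
      have g1 : (1:ℝ) ≤ n1 := by exact_mod_cast (show (1:ℤ) ≤ n1 by omega)
      linarith
    · intro z1 hz1 z2 hz2 a b ha hb hab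
      simp only [mem_setOf_eq, Prod.snd_add, Prod.smul_snd, Pi.add_apply, Pi.smul_apply,
        smul_eq_mul] at *
      nlinarith
  exact fun z hz => hsub hz

lemma b1_memPI : b1 ∈ cksPI :=
  subset_convexHull ℝ _ ⟨by norm_num [cksP, b1], b1_int⟩


/-- On the Cook–Kannan–Schrijver example the mixed integer optimum of `max y` is `0`, but every
iterated split closure still has value strictly greater than `0`: split cuts never prove the
optimal value. -/
theorem cks_split_closures_never_reach_optimum :
    sSup ((fun z : (Fin 2 → ℝ) × (Fin 1 → ℝ) => z.2 0) '' cksPI) = 0 ∧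
    ∀ i : ℕ, 0 < sSup ((fun z : (Fin 2 → ℝ) × (Fin 1 → ℝ) => z.2 0) '' splitIter cksP i) := by
  constructor
  · have hub : ∀ v ∈ (fun z : pt => z.2 0) '' cksPI, v ≤ 0 := by
      rintro v ⟨z, hz, rfl⟩; exact hull_bound z hz
    have hmem : (0:ℝ) ∈ (fun z : pt => z.2 0) '' cksPI := ⟨b1, b1_memPI, by norm_num [b1]⟩
    exact le_antisymm (csSup_le ⟨0, hmem⟩ hub) (le_csSup ⟨0, hub⟩ hmem)
  · intro i
    have hub : ∀ v ∈ (fun z : pt => z.2 0) '' splitIter cksP i, v ≤ 2/3 := by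
      rintro v ⟨z, hz, rfl⟩
      obtain ⟨a, b, c⟩ := (invariant i).2.2 hz
      linarith
    have hmem : (2/3)/3^i ∈ (fun z : pt => z.2 0) '' splitIter cksP i :=
      ⟨apexp ((2/3)/3^i), (invariant i).1 (subset_convexHull ℝ _ (by simp)), by norm_num [apexp]⟩
    have hpos : (0:ℝ) < (2/3)/3^i := by positivity
    have hle := le_csSup ⟨2/3, hub⟩ hmem
    linarith
end
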